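/- Let X = [0,∞) with the Euclidean distance, let h ≥ 1 be a natural number, and let f_h : X → ℝ be defined by f_h(x) = 1 − hx for 0 ≤ x ≤ 1/h and f_h(x) = 0 for x > 1/h. Then for every absolutely continuous curve φ : [0,1] → X with φ(0) = 0 and φ(1) = 1, it holds ∫₀¹ |φ̇|²(t) + |∂f_h|²(φ(t)) dt ≥ 2. -/

import Mathlib

open Filter Topology MeasureTheory
open scoped ENNReal NNReal Classical

section Defs

variable {X : Type*} [MetricSpace X]

/-- The descending slope `|∂f|(x)` of `f : X → ℝ ∪ {+∞}`.  It is `+∞` outside of the effective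
domain, and otherwise `limsup_{y → x} (f x - f y)⁺ / d(y,x)` (which is `0` at isolated points,
since then the limsup is taken along the bottom filter). -/
noncomputable def descSlope (f : X → EReal) (x : X) : ℝ≥0∞ :=
  if f x = ⊤ then ⊤
  else Filter.limsup (fun y => ENNReal.ofReal (((f x - f y) ⊔ 0).toReal / dist y x)) (𝓝[≠] x)

/-- The (upper) metric speed of a curve at a point: where the metric derivative
`lim_{s → t} d(γ s, γ t)/|s - t|` exists, it coincides with this limsup. -/
noncomputable def mSpeed (γ : ℝ → X) (t : ℝ) : ℝ≥0∞ :=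
  Filter.limsup (fun s => ENNReal.ofReal (dist (γ s) (γ t) / |s - t|)) (𝓝[≠] t)

/-- A curve is absolutely continuous on `[a,b]` if its increments are controlled by the
integral of some nonnegative integrable function. -/
def IsACCurveOn (γ : ℝ → X) (a b : ℝ) : Prop :=
  ∃ g : ℝ → ℝ, MeasureTheory.IntegrableOn g (Set.Icc a b) ∧ (∀ t, 0 ≤ g t) ∧
    ∀ s t : ℝ, a ≤ s → s ≤ t → t ≤ b → dist (γ s) (γ t) ≤ ∫ r in s..t, g r

/-- The action integral `∫₀¹ |γ̇|²(t) + |∂f|²(γ(t)) dt`. -/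
noncomputable def actionIntegral (f : X → EReal) (γ : ℝ → X) : ℝ≥0∞ :=
  ∫⁻ t in Set.Ioo (0:ℝ) 1, ((mSpeed γ t) ^ 2 + (descSlope f (γ t)) ^ 2)

/-- The action functional `Θ^f_{x₀,x₁}`. -/
noncomputable def Theta (f : X → EReal) (x₀ x₁ : X) (γ : ℝ → X) : ℝ≥0∞ :=
  if IsACCurveOn γ 0 1 ∧ γ 0 = x₀ ∧ γ 1 = x₁ then actionIntegral f γ else ⊤

/-- `γ : [0,1] → X` is a constant speed geodesic. -/
def IsGeodesic (γ : ℝ → X) : Prop :=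
  ∀ s ∈ Set.Icc (0:ℝ) 1, ∀ t ∈ Set.Icc (0:ℝ) 1,
    dist (γ s) (γ t) = |s - t| * dist (γ 0) (γ 1)

/-- Every pair of points is joined by a constant speed geodesic. -/
def GeodesicSp (X : Type*) [MetricSpace X] : Prop :=
  ∀ x y : X, ∃ γ : ℝ → X, IsGeodesic γ ∧ γ 0 = x ∧ γ 1 = y

/-- `X` is a CAT(0) space. -/
def IsCAT0 (X : Type*) [MetricSpace X] : Prop :=
  GeodesicSp X ∧ ∀ (y : X) (γ : ℝ → X), IsGeodesic γ → ∀ t ∈ Set.Icc (0:ℝ) 1,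
    dist y (γ t) ^ 2 ≤ (1 - t) * dist y (γ 0) ^ 2 + t * dist y (γ 1) ^ 2
      - t * (1 - t) * dist (γ 0) (γ 1) ^ 2

/-- `f` is `λ`-convex along every constant speed geodesic. -/
def LambdaConvex (f : X → EReal) (lam : ℝ) : Prop :=
  ∀ γ : ℝ → X, IsGeodesic γ → ∀ t ∈ Set.Icc (0:ℝ) 1,
    f (γ t) ≤ ((1 - t : ℝ) : EReal) * f (γ 0) + ((t : ℝ) : EReal) * f (γ 1)
      - ((lam / 2 * t * (1 - t) * dist (γ 0) (γ 1) ^ 2 : ℝ) : EReal)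

/-- The resolvent `J_τ^f x`: the set of minimizers of `y ↦ f y + d(y,x)²/(2τ)`. -/
def resolvSet (f : X → EReal) (τ : ℝ) (x : X) : Set X :=
  {u | ∀ y : X, f u + ((dist u x ^ 2 / (2 * τ) : ℝ) : EReal)
      ≤ f y + ((dist y x ^ 2 / (2 * τ) : ℝ) : EReal)}

def IsBoundedSeq (u : ℕ → X) : Prop := ∃ R : ℝ, ∀ n, dist (u n) (u 0) ≤ R

/-- `x` is the asymptotic centre of the (bounded) sequence `u`, i.e. the unique minimizer of
`y ↦ limsup_n d(y, u n)²`. -/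
def IsAsympCentre (u : ℕ → X) (x : X) : Prop :=
  ∀ y : X, y ≠ x →
    Filter.limsup (fun n => dist x (u n) ^ 2) Filter.atTop
      < Filter.limsup (fun n => dist y (u n) ^ 2) Filter.atTop

/-- Weak convergence: `u` is bounded and `x` is the asymptotic centre of every subsequence. -/
def WeakConv (u : ℕ → X) (x : X) : Prop :=
  IsBoundedSeq u ∧ ∀ φ : ℕ → ℕ, StrictMono φ → IsAsympCentre (u ∘ φ) x

/-- Mosco convergence of `F h` to `f`. -/
def MoscoConv (F : ℕ → X → EReal) (f : X → EReal) : Prop :=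
  (∀ (u : ℕ → X) (x : X), WeakConv u x →
      f x ≤ Filter.liminf (fun h => F h (u h)) Filter.atTop) ∧
  (∀ x : X, ∃ u : ℕ → X, Filter.Tendsto u Filter.atTop (𝓝 x) ∧
      Filter.limsup (fun h => F h (u h)) Filter.atTop ≤ f x)

/-- (Metric) Γ-convergence of `F h` to `f`. -/
def GammaConvSeq (F : ℕ → X → EReal) (f : X → EReal) : Prop :=
  (∀ (u : ℕ → X) (x : X), Filter.Tendsto u Filter.atTop (𝓝 x) →
      f x ≤ Filter.liminf (fun h => F h (u h)) Filter.atTop) ∧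
  (∀ x : X, ∃ u : ℕ → X, Filter.Tendsto u Filter.atTop (𝓝 x) ∧
      Filter.limsup (fun h => F h (u h)) Filter.atTop ≤ f x)

/-- Assumption 2.4.5 of Ambrosio-Gigli-Savaré: convexity of the Moreau-Yosida perturbations
along some curve, with base point `x₀`. -/
def AssumptionA1 (f : X → EReal) (lam : ℝ) : Prop :=
  ∀ x₀ x₁ : X, f x₀ ≠ ⊤ → f x₁ ≠ ⊤ →
    ∃ γ : ℝ → X, γ 0 = x₀ ∧ γ 1 = x₁ ∧
      ∀ τ : ℝ, 0 < τ → τ * max (-lam) 0 < 1 →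
        ∀ t ∈ Set.Icc (0:ℝ) 1,
          f (γ t) ≤ (((1 - t) * (f x₀).toReal
            + t * ((f x₁).toReal + dist x₁ x₀ ^ 2 / (2 * τ))
            - (1 / 2) * (lam + 1 / τ) * t * (1 - t) * dist x₀ x₁ ^ 2
            - dist (γ t) x₀ ^ 2 / (2 * τ) : ℝ) : EReal)

/-- Assumption 4.0.1 of Ambrosio-Gigli-Savaré: convexity of the Moreau-Yosida perturbations
along some curve, for every base point `y`. -/
def AssumptionA2 (f : X → EReal) (lam : ℝ) : Prop :=
  ∀ y x₀ x₁ : X, f y ≠ ⊤ → f x₀ ≠ ⊤ → f x₁ ≠ ⊤ →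
    ∃ γ : ℝ → X, γ 0 = x₀ ∧ γ 1 = x₁ ∧
      ∀ τ : ℝ, 0 < τ → τ * max (-lam) 0 < 1 →
        ∀ t ∈ Set.Icc (0:ℝ) 1,
          f (γ t) ≤ (((1 - t) * ((f x₀).toReal + dist x₀ y ^ 2 / (2 * τ))
            + t * ((f x₁).toReal + dist x₁ y ^ 2 / (2 * τ))
            - (1 / 2) * (lam + 1 / τ) * t * (1 - t) * dist x₀ x₁ ^ 2
            - dist (γ t) y ^ 2 / (2 * τ) : ℝ) : EReal)

/-- `G` is an `EVI_λ` gradient flow trajectory for `f` starting at `x`. -/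
def IsEVIFlow (f : X → EReal) (lam : ℝ) (x : X) (G : ℝ → X) : Prop :=
  G 0 = x ∧ Filter.Tendsto G (𝓝[>] (0:ℝ)) (𝓝 x) ∧
  (∀ t : ℝ, 0 < t → f (G t) ≠ ⊤) ∧
  (∀ a b : ℝ, 0 < a → a ≤ b → IsACCurveOn G a b) ∧
  ∀ v : X, f v ≠ ⊤ →
    ∀ᵐ t ∂(MeasureTheory.volume.restrict (Set.Ioi (0:ℝ))),
      ∃ L : ℝ, HasDerivAt (fun s => dist (G s) v ^ 2) L t ∧
        f (G t) + ((L / 2 + lam / 2 * dist (G t) v ^ 2 : ℝ) : EReal) ≤ f v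

/-- Γ-convergence of the functionals `Th h` to `T` on `C([0,1], X)` with respect to uniform
convergence on `[0,1]`. -/
def ThetaGammaConv (Th : ℕ → (ℝ → X) → ℝ≥0∞) (T : (ℝ → X) → ℝ≥0∞) : Prop :=
  (∀ γ : ℝ → X, ContinuousOn γ (Set.Icc 0 1) →
    ∀ Γ : ℕ → ℝ → X, (∀ h, ContinuousOn (Γ h) (Set.Icc 0 1)) →
      TendstoUniformlyOn (fun h t => Γ h t) γ Filter.atTop (Set.Icc 0 1) →
      T γ ≤ Filter.liminf (fun h => Th h (Γ h)) Filter.atTop) ∧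
  (∀ γ : ℝ → X, ContinuousOn γ (Set.Icc 0 1) →
    ∃ Γ : ℕ → ℝ → X, (∀ h, ContinuousOn (Γ h) (Set.Icc 0 1)) ∧
      TendstoUniformlyOn (fun h t => Γ h t) γ Filter.atTop (Set.Icc 0 1) ∧
      Filter.limsup (fun h => Th h (Γ h)) Filter.atTop ≤ T γ)

end Defs

section Aux
open Set

lemma aux_two_mul_le (a b : ℝ≥0∞) : 2*a*b ≤ a^2 + b^2 := by
  rcases le_total a b with hle | hle
  · obtain ⟨c, rfl⟩ := exists_add_of_le hle
    calc 2*a*(a+c) = a^2 + (a^2 + 2*(a*c)) := by ring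
    _ ≤ a^2 + (a^2 + (2*(a*c) + c^2)) := by gcongr; exact le_add_right le_rfl
    _ = a^2 + (a+c)^2 := by ring
  · obtain ⟨c, rfl⟩ := exists_add_of_le hle
    calc 2*(b+c)*b = b^2 + (b^2 + 2*(b*c)) := by ring
    _ ≤ (b+c)^2 + b^2 := by
        rw [add_comm]; gcongr
        calc b^2 + 2*(b*c) ≤ b^2 + (2*(b*c)+c^2) := by gcongr; exact le_add_right le_rfl
        _ = (b+c)^2 := by ring

end Aux

/-- Second example: on `X = [0,∞)` with `f_h(x) = max(1 - h x, 0)`, any absolutely continuous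
curve from `0` to `1` has `f_h`-action at least `2`. -/
theorem statement17 (h : ℕ) (hh : 1 ≤ h)
    (φ : ℝ → {x : ℝ // 0 ≤ x}) (hφ : IsACCurveOn φ 0 1)
    (h0 : (φ 0 : ℝ) = 0) (h1 : (φ 1 : ℝ) = 1) :
    (2 : ℝ≥0∞) ≤
      actionIntegral
        (fun x : {x : ℝ // 0 ≤ x} =>
          ((if (x : ℝ) ≤ 1 / (h : ℝ) then 1 - (h : ℝ) * (x : ℝ) else 0 : ℝ) : EReal)) φ := by
  classical
  set fE : {x : ℝ // 0 ≤ x} → EReal := (fun x : {x : ℝ // 0 ≤ x} =>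
          ((if (x : ℝ) ≤ 1 / (h : ℝ) then 1 - (h : ℝ) * (x : ℝ) else 0 : ℝ) : EReal)) with hfE
  have hh' : (1:ℝ) ≤ (h:ℝ) := by exact_mod_cast hh
  have hhpos : (0:ℝ) < (h:ℝ) := by linarith
  set ψ : ℝ → ℝ := fun t => (φ t : ℝ) with hψ
  obtain ⟨g, hgint, hg0, hgd⟩ := hφ
  set gt : ℝ → ℝ := (Set.Ioc (0:ℝ) 1).indicator g with hgt
  have hgtint : MeasureTheory.Integrable gt :=
    (integrable_indicator_iff measurableSet_Ioc).2 (hgint.mono_set Set.Ioc_subset_Icc_self)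
  have hgt0 : ∀ t, 0 ≤ gt t := fun t => Set.indicator_nonneg (fun r _ => hg0 r) t
  set G : ℝ → ℝ := fun t => ∫ r in (0:ℝ)..t, gt r with hG
  have hGcont : Continuous G :=
    intervalIntegral.continuous_primitive (fun a b => hgtint.intervalIntegrable) 0
  have hGadd : ∀ s t : ℝ, G t - G s = ∫ r in s..t, gt r := by
    intro s t
    have h2 := intervalIntegral.integral_add_adjacent_intervals (a := (0:ℝ)) (b := s) (c := t)
      hgtint.intervalIntegrable hgtint.intervalIntegrable
    simp only [hG]
    linarith
  have hGmono : Monotone G := by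
    intro s t hst
    have h1 := hGadd s t
    have h2 : 0 ≤ ∫ r in s..t, gt r :=
      intervalIntegral.integral_nonneg hst (fun r _ => hgt0 r)
    linarith
  -- the clamp map
  set c : ℝ → ℝ := fun t => max 0 (min 1 t) with hc
  have hc01 : ∀ t, c t ∈ Set.Icc (0:ℝ) 1 :=
    fun t => ⟨le_max_left _ _, max_le (by norm_num) (min_le_left _ _)⟩
  have hcid : ∀ t ∈ Set.Icc (0:ℝ) 1, c t = t := by
    intro t ht
    simp only [hc]
    rw [min_eq_right ht.2, max_eq_right ht.1]
  -- G is constant outside [0,1]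
  have hGc : ∀ t, G (c t) = G t := by
    intro t
    rcases le_or_gt t 0 with ht | ht
    · have hct : c t = 0 := by
        simp only [hc]
        rw [min_eq_right (le_trans ht zero_le_one), max_eq_left ht]
      rw [hct]
      have h2 : G 0 - G t = ∫ r in t..(0:ℝ), gt r := hGadd t 0
      have h3 : (∫ r in t..(0:ℝ), gt r) = 0 := by
        rw [intervalIntegral.integral_of_le ht]
        rw [MeasureTheory.setIntegral_congr_fun measurableSet_Ioc
          (g := fun _ => (0:ℝ)) (fun r hr => Set.indicator_of_notMem
            (fun hmem => absurd hmem.1 (not_lt.2 hr.2)) g)]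
        simp
      linarith
    rcases le_or_gt t 1 with ht1 | ht1
    · rw [hcid t ⟨ht.le, ht1⟩]
    · have hct : c t = 1 := by
        simp only [hc]
        rw [min_eq_left ht1.le, max_eq_right zero_le_one]
      rw [hct]
      have h2 : G t - G 1 = ∫ r in (1:ℝ)..t, gt r := hGadd 1 t
      have h3 : (∫ r in (1:ℝ)..t, gt r) = 0 := by
        rw [intervalIntegral.integral_of_le ht1.le]
        rw [MeasureTheory.setIntegral_congr_fun measurableSet_Ioc
          (g := fun _ => (0:ℝ)) (fun r hr => Set.indicator_of_notMem
            (fun hmem => absurd hmem.2 (not_le.2 hr.1)) g)]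
        simp
      linarith
  set ψc : ℝ → ℝ := fun t => ψ (c t) with hψc
  -- key increment bound
  have hkey : ∀ s t : ℝ, s ≤ t → |ψc t - ψc s| ≤ G t - G s := by
    intro s t hst
    have hcs := hc01 s
    have hct := hc01 t
    have hcmono : c s ≤ c t := max_le_max le_rfl (min_le_min le_rfl hst)
    have hd := hgd (c s) (c t) hcs.1 hcmono hct.2
    have heq : (∫ r in (c s)..(c t), g r) = ∫ r in (c s)..(c t), gt r := by
      rw [intervalIntegral.integral_of_le hcmono, intervalIntegral.integral_of_le hcmono]
      refine MeasureTheory.setIntegral_congr_fun measurableSet_Ioc (fun r hr => ?_)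
      have : r ∈ Set.Ioc (0:ℝ) 1 := ⟨lt_of_le_of_lt hcs.1 hr.1, le_trans hr.2 hct.2⟩
      exact (Set.indicator_of_mem this g).symm
    have hdist : dist (φ (c s)) (φ (c t)) = |ψc t - ψc s| := by
      rw [Subtype.dist_eq, Real.dist_eq, abs_sub_comm]
    have hGint : (∫ r in (c s)..(c t), gt r) = G t - G s := by
      rw [← hGadd]
      rw [hGc s, hGc t]
    rw [hdist, heq, hGint] at hd
    exact hd
  -- continuity of ψc
  have hψccont : Continuous ψc := by
    rw [continuous_iff_continuousAt]
    intro t₀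
    have hb : ∀ s, |ψc s - ψc t₀| ≤ |G s - G t₀| := by
      intro s
      rcases le_total s t₀ with hs | hs
      · calc |ψc s - ψc t₀| = |ψc t₀ - ψc s| := abs_sub_comm _ _
        _ ≤ G t₀ - G s := hkey s t₀ hs
        _ ≤ |G t₀ - G s| := le_abs_self _
        _ = |G s - G t₀| := abs_sub_comm _ _
      · calc |ψc s - ψc t₀| ≤ G s - G t₀ := hkey t₀ s hs
        _ ≤ |G s - G t₀| := le_abs_self _
    have htend : Filter.Tendsto (fun s => |G s - G t₀|) (𝓝 t₀) (𝓝 0) := by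
      have h2 : Continuous (fun s => |G s - G t₀|) :=
        (hGcont.sub continuous_const).abs
      have := h2.tendsto t₀
      simpa using this
    rw [ContinuousAt, tendsto_iff_dist_tendsto_zero]
    refine squeeze_zero (fun s => dist_nonneg) (fun s => ?_) htend
    rw [Real.dist_eq]
    exact hb s
  have hψc0 : ψc 0 = 0 := by
    simp only [hψc]
    rw [hcid 0 ⟨le_rfl, zero_le_one⟩]
    exact h0
  have hψc1 : ψc 1 = 1 := by
    simp only [hψc]
    rw [hcid 1 ⟨zero_le_one, le_rfl⟩]
    exact h1
  -- the Stieltjes functions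
  set Fp : StieltjesFunction ℝ :=
    { toFun := fun t => G t + ψc t
      mono' := by
        intro s t hst
        have := (abs_le.1 (hkey s t hst)).1
        dsimp only
        linarith
      right_continuous' := fun x => ((hGcont.add hψccont).continuousAt).continuousWithinAt } with hFp
  set Fm : StieltjesFunction ℝ :=
    { toFun := fun t => G t - ψc t
      mono' := by
        intro s t hst
        have := (abs_le.1 (hkey s t hst)).2
        dsimp only
        linarith
      right_continuous' := fun x => ((hGcont.sub hψccont).continuousAt).continuousWithinAt } with hFm
  set ν : MeasureTheory.Measure ℝ := MeasureTheory.volume.withDensity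
    (fun r => ENNReal.ofReal (gt r)) with hν
  have hνIoc : ∀ a b : ℝ, a ≤ b → ν (Set.Ioc a b) = ENNReal.ofReal (G b - G a) := by
    intro a b hab
    rw [hν, MeasureTheory.withDensity_apply _ measurableSet_Ioc]
    rw [← MeasureTheory.ofReal_integral_eq_lintegral_ofReal
      (hgtint.integrableOn)
      (Filter.Eventually.of_forall (fun r => hgt0 r))]
    congr 1
    rw [hGadd a b, intervalIntegral.integral_of_le hab]
  have hsum : Fp.measure + Fm.measure = (2:ℝ≥0∞) • ν := by
    refine MeasureTheory.Measure.ext_of_Ioc' _ _ (fun a b hab => ?_) (fun a b hab => ?_)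
    · rw [MeasureTheory.Measure.add_apply, StieltjesFunction.measure_Ioc,
        StieltjesFunction.measure_Ioc]
      exact ENNReal.add_ne_top.2 ⟨ENNReal.ofReal_ne_top, ENNReal.ofReal_ne_top⟩
    rw [MeasureTheory.Measure.add_apply, StieltjesFunction.measure_Ioc,
      StieltjesFunction.measure_Ioc, MeasureTheory.Measure.smul_apply,
      hνIoc a b hab.le, smul_eq_mul]
    have hab' := (abs_le.1 (hkey a b hab.le))
    have e1 : Fp b - Fp a = (G b - G a) + (ψc b - ψc a) := by
      show (G b + ψc b) - (G a + ψc a) = _; ring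
    have e2 : Fm b - Fm a = (G b - G a) - (ψc b - ψc a) := by
      show (G b - ψc b) - (G a - ψc a) = _; ring
    rw [e1, e2, ← ENNReal.ofReal_add (by linarith [hab'.1]) (by linarith [hab'.2])]
    rw [show ((G b - G a) + (ψc b - ψc a)) + ((G b - G a) - (ψc b - ψc a))
      = 2 * (G b - G a) by ring]
    rw [ENNReal.ofReal_mul (by norm_num), ENNReal.ofReal_ofNat]
  have hνac : ν ≪ MeasureTheory.volume := MeasureTheory.withDensity_absolutelyContinuous _ _
  have hacaux : ∀ μ : MeasureTheory.Measure ℝ, μ ≤ Fp.measure + Fm.measure →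
      μ ≪ MeasureTheory.volume := by
    intro μ hle s hs
    have h2 : ν s = 0 := hνac hs
    have h3 := hle s
    rw [hsum, MeasureTheory.Measure.smul_apply, h2, smul_eq_mul, mul_zero] at h3
    exact le_antisymm h3 (zero_le (a := μ s))
  have hpac : Fp.measure ≪ MeasureTheory.volume :=
    hacaux _ (MeasureTheory.Measure.le_add_right le_rfl)
  have hmac : Fm.measure ≪ MeasureTheory.volume :=
    hacaux _ (MeasureTheory.Measure.le_add_left le_rfl)
  set Dp : ℝ → ℝ≥0∞ := Fp.measure.rnDeriv MeasureTheory.volume with hDp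
  set Dm : ℝ → ℝ≥0∞ := Fm.measure.rnDeriv MeasureTheory.volume with hDm
  have hDpint : ∀ s : Set ℝ, MeasurableSet s → ∫⁻ t in s, Dp t = Fp.measure s := by
    intro s hs
    conv_rhs => rw [← MeasureTheory.Measure.withDensity_rnDeriv_eq _ _ hpac]
    rw [MeasureTheory.withDensity_apply _ hs]
  have hDmint : ∀ s : Set ℝ, MeasurableSet s → ∫⁻ t in s, Dm t = Fm.measure s := by
    intro s hs
    conv_rhs => rw [← MeasureTheory.Measure.withDensity_rnDeriv_eq _ _ hmac]
    rw [MeasureTheory.withDensity_apply _ hs]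
  -- a.e. speed inequality
  have hms : ∀ᵐ t ∂MeasureTheory.volume, t ∈ Set.Ioo (0:ℝ) 1 →
      Dp t ≤ 2 * mSpeed φ t + Dm t := by
    filter_upwards [Fp.ae_hasDerivAt, Fm.ae_hasDerivAt,
      MeasureTheory.Measure.rnDeriv_lt_top Fp.measure MeasureTheory.volume,
      MeasureTheory.Measure.rnDeriv_lt_top Fm.measure MeasureTheory.volume]
      with t hdp hdm hfp hfm ht
    set a := (Dp t).toReal with ha
    set b := (Dm t).toReal with hb
    set d := (a - b)/2 with hd
    have hψder : HasDerivAt ψc d t := by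
      have hfun : ψc = fun s => (Fp s - Fm s)/2 := by
        funext s
        show ψ (c s) = ((G s + ψc s) - (G s - ψc s))/2
        simp only [hψc]
        ring
      rw [hfun]
      exact (hdp.sub hdm).div_const 2
    have habs : Filter.Tendsto (fun s => |ψc s - ψc t| / |s - t|) (𝓝[≠] t) (𝓝 |d|) := by
      have h2 := hasDerivAt_iff_tendsto_slope.1 hψder
      refine h2.abs.congr (fun s => ?_)
      rw [slope_def_field, abs_div]
    have hmsp : mSpeed φ t = ENNReal.ofReal |d| := by
      have hev : (fun s => ENNReal.ofReal (|ψc s - ψc t| / |s - t|)) =ᶠ[𝓝[≠] t]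
          (fun s => ENNReal.ofReal (dist (φ s) (φ t) / |s - t|)) := by
        have hIoo : Set.Ioo (0:ℝ) 1 ∈ 𝓝[≠] t :=
          nhdsWithin_le_nhds (Ioo_mem_nhds ht.1 ht.2)
        filter_upwards [hIoo] with s hs
        have hds : dist (φ s) (φ t) = |ψc s - ψc t| := by
          rw [Subtype.dist_eq, Real.dist_eq]
          simp only [hψc]
          rw [hcid s (Set.Ioo_subset_Icc_self hs), hcid t (Set.Ioo_subset_Icc_self ht)]
        rw [hds]
      have htendsto : Filter.Tendsto (fun s => ENNReal.ofReal (dist (φ s) (φ t)/|s-t|))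
          (𝓝[≠] t) (𝓝 (ENNReal.ofReal |d|)) :=
        Filter.Tendsto.congr' hev ((ENNReal.continuous_ofReal.tendsto _).comp habs)
      exact htendsto.limsup_eq
    have hDpe : Dp t = ENNReal.ofReal a := (ENNReal.ofReal_toReal hfp.ne).symm
    have hDme : Dm t = ENNReal.ofReal b := (ENNReal.ofReal_toReal hfm.ne).symm
    rw [hmsp, hDpe, hDme]
    have h3 : a ≤ 2*|d| + b := by
      have h4 : a - b ≤ |a - b| := le_abs_self _
      have h5 : |a - b| = 2 * |d| := by
        rw [hd, abs_div, abs_two]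
        ring
      linarith
    calc ENNReal.ofReal a ≤ ENNReal.ofReal (2*|d| + b) := ENNReal.ofReal_le_ofReal h3
    _ = ENNReal.ofReal (2*|d|) + ENNReal.ofReal b :=
        ENNReal.ofReal_add (by positivity) (by rw [hb]; exact ENNReal.toReal_nonneg)
    _ = 2 * ENNReal.ofReal |d| + ENNReal.ofReal b := by
        rw [ENNReal.ofReal_mul (by norm_num), ENNReal.ofReal_ofNat]
  -- slope lower bound
  have hslope : ∀ x : {x : ℝ // 0 ≤ x}, (x:ℝ) < 1/(h:ℝ) →
      ENNReal.ofReal (h:ℝ) ≤ descSlope fE x := by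
    intro x hx
    have hnt : fE x ≠ ⊤ := by
      simp only [hfE]
      exact EReal.coe_ne_top _
    have hds : descSlope fE x = Filter.limsup
        (fun y => ENNReal.ofReal (((fE x - fE y) ⊔ 0).toReal / dist y x)) (𝓝[≠] x) := by
      simp only [descSlope, if_neg hnt]
    rw [hds]
    set m : ℝ → {x : ℝ // 0 ≤ x} :=
      fun t => ⟨(x:ℝ) + max t 0, add_nonneg x.2 (le_max_right t 0)⟩ with hm
    have hmt : Filter.Tendsto m (𝓝[>] (0:ℝ)) (𝓝[≠] x) := by
      rw [tendsto_nhdsWithin_iff]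
      constructor
      · rw [tendsto_subtype_rng]
        have h2 : Filter.Tendsto (fun t : ℝ => (x:ℝ) + max t 0) (𝓝 0)
            (𝓝 ((x:ℝ) + max 0 0)) :=
          (continuous_const.add (continuous_id.max continuous_const)).tendsto 0
        simp only [max_self, add_zero] at h2
        exact h2.mono_left nhdsWithin_le_nhds
      · filter_upwards [self_mem_nhdsWithin] with t ht
        simp only [Set.mem_compl_iff, Set.mem_singleton_iff]
        intro hteq
        have hval : (x:ℝ) + max t 0 = (x:ℝ) := congrArg Subtype.val hteq
        rw [max_eq_left (le_of_lt ht)] at hval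
        have : (0:ℝ) < t := ht
        linarith
    have hcomp : Filter.limsup ((fun y => ENNReal.ofReal (((fE x - fE y) ⊔ 0).toReal / dist y x))
        ∘ m) (𝓝[>] (0:ℝ)) = ENNReal.ofReal (h:ℝ) := by
      have hev : ((fun y => ENNReal.ofReal (((fE x - fE y) ⊔ 0).toReal / dist y x)) ∘ m)
          =ᶠ[𝓝[>] (0:ℝ)] (fun _ => ENNReal.ofReal (h:ℝ)) := by
        have h1 : Set.Iio (1/(h:ℝ) - (x:ℝ)) ∈ 𝓝[>] (0:ℝ) :=
          nhdsWithin_le_nhds (Iio_mem_nhds (by linarith))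
        filter_upwards [h1, self_mem_nhdsWithin] with t h2 h3
        have h3' : (0:ℝ) < t := h3
        have hmax : max t 0 = t := max_eq_left h3'.le
        have hval : ((m t : ℝ)) = (x:ℝ) + t := by
          simp only [hm, hmax]
        have hy1 : ((m t : ℝ)) ≤ 1/(h:ℝ) := by rw [hval]; linarith [Set.mem_Iio.1 h2]
        have hx1 : (x:ℝ) ≤ 1/(h:ℝ) := hx.le
        show ENNReal.ofReal (((fE x - fE (m t)) ⊔ 0).toReal / dist (m t) x) = _
        have hfx : fE x = ((1 - (h:ℝ)*(x:ℝ) : ℝ) : EReal) := by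
          simp only [hfE, if_pos hx1]
        have hfy : fE (m t) = ((1 - (h:ℝ)*((m t:ℝ)) : ℝ) : EReal) := by
          simp only [hfE, if_pos hy1]
        rw [hfx, hfy, ← EReal.coe_sub]
        have hcalc : (1 - (h:ℝ)*(x:ℝ)) - (1 - (h:ℝ)*((m t:ℝ))) = (h:ℝ) * t := by
          rw [hval]; ring
        rw [hcalc]
        have hsup : (((h:ℝ)*t : ℝ) : EReal) ⊔ 0 = (((h:ℝ)*t : ℝ) : EReal) := by
          refine sup_eq_left.2 ?_
          exact_mod_cast (by positivity : (0:ℝ) ≤ (h:ℝ)*t)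
        rw [hsup, EReal.toReal_coe]
        have hdm : dist (m t) x = t := by
          rw [Subtype.dist_eq, hval, Real.dist_eq]
          rw [show (x:ℝ) + t - (x:ℝ) = t by ring, abs_of_pos h3']
        rw [hdm, mul_div_assoc, div_self (ne_of_gt h3'), mul_one]
      rw [Filter.limsup_congr hev]
      exact Filter.limsup_const _
    calc ENNReal.ofReal (h:ℝ)
        = Filter.limsup ((fun y => ENNReal.ofReal (((fE x - fE y) ⊔ 0).toReal / dist y x)) ∘ m)
          (𝓝[>] (0:ℝ)) := hcomp.symm
    _ = Filter.limsup (fun y => ENNReal.ofReal (((fE x - fE y) ⊔ 0).toReal / dist y x))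
          (Filter.map m (𝓝[>] (0:ℝ))) := Filter.limsup_comp _ m _
    _ ≤ _ := Filter.limsup_le_limsup_of_le hmt
  -- the first hitting time of 1/h
  set S : Set ℝ := {t : ℝ | 1/(h:ℝ) ≤ ψc t} ∩ Set.Icc 0 1 with hS
  have hSclosed : IsClosed S := (isClosed_le continuous_const hψccont).inter isClosed_Icc
  have hS1 : (1:ℝ) ∈ S := by
    refine ⟨?_, zero_le_one, le_rfl⟩
    show 1/(h:ℝ) ≤ ψc 1
    rw [hψc1, div_le_one hhpos]
    exact hh'
  have hSbdd : BddBelow S := ⟨0, fun t ht => ht.2.1⟩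
  set T : ℝ := sInf S with hT
  have hTS : T ∈ S := hSclosed.csInf_mem ⟨1, hS1⟩ hSbdd
  have hT1 : T ≤ 1 := hTS.2.2
  have hinvh : (0:ℝ) < 1/(h:ℝ) := by positivity
  have hT0 : 0 < T := by
    rcases (hTS.2.1).lt_or_eq with hlt | heq
    · exact hlt
    · exfalso
      have h2 : 1/(h:ℝ) ≤ ψc 0 := by rw [heq]; exact hTS.1
      rw [hψc0] at h2
      linarith
  have hψT : 1/(h:ℝ) ≤ ψc T := hTS.1
  have hltT : ∀ t ∈ Set.Ioo (0:ℝ) T, (ψ t < 1/(h:ℝ)) ∧ t ∈ Set.Ioo (0:ℝ) 1 := by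
    intro t ht
    have htI : t ∈ Set.Ioo (0:ℝ) 1 := ⟨ht.1, lt_of_lt_of_le ht.2 hT1⟩
    refine ⟨?_, htI⟩
    by_contra hcon
    push_neg at hcon
    have hmem : t ∈ S := by
      refine ⟨?_, Set.Ioo_subset_Icc_self htI⟩
      show 1/(h:ℝ) ≤ ψc t
      simp only [hψc]
      rw [hcid t (Set.Ioo_subset_Icc_self htI)]
      exact hcon
    have := csInf_le hSbdd hmem
    linarith [ht.2]
  -- step 1 : action is at least the weighted speed integral
  have step1 : ∫⁻ t in Set.Ioo (0:ℝ) T, (2*(h:ℝ≥0∞)) * mSpeed φ t ≤ actionIntegral fE φ := by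
    have hb1 : ∫⁻ t in Set.Ioo (0:ℝ) T, (2*(h:ℝ≥0∞)) * mSpeed φ t
        ≤ ∫⁻ t in Set.Ioo (0:ℝ) T, ((mSpeed φ t)^2 + (descSlope fE (φ t))^2) := by
      refine MeasureTheory.lintegral_mono_ae ?_
      filter_upwards [MeasureTheory.ae_restrict_mem measurableSet_Ioo] with t ht
      obtain ⟨hψlt, htI⟩ := hltT t ht
      have hsl : ENNReal.ofReal (h:ℝ) ≤ descSlope fE (φ t) := hslope (φ t) hψlt
      calc (2*(h:ℝ≥0∞)) * mSpeed φ t = 2 * mSpeed φ t * ENNReal.ofReal (h:ℝ) := by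
            rw [ENNReal.ofReal_natCast]; ring
      _ ≤ 2 * mSpeed φ t * descSlope fE (φ t) := by gcongr
      _ ≤ (mSpeed φ t)^2 + (descSlope fE (φ t))^2 := aux_two_mul_le _ _
    refine le_trans hb1 ?_
    exact MeasureTheory.lintegral_mono_set (Set.Ioo_subset_Ioo le_rfl hT1)
  -- step 2 : FTC-type lower bound for the speed integral
  have hIocIoo : ∫⁻ t in Set.Ioo (0:ℝ) T, mSpeed φ t = ∫⁻ t in Set.Ioc (0:ℝ) T, mSpeed φ t := by
    rw [MeasureTheory.Measure.restrict_congr_set MeasureTheory.Ioo_ae_eq_Ioc]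
  have step2 : ENNReal.ofReal (2 * ψc T) ≤ 2 * ∫⁻ t in Set.Ioc (0:ℝ) T, mSpeed φ t := by
    have hboundae : ∀ᵐ t ∂(MeasureTheory.volume.restrict (Set.Ioc (0:ℝ) T)),
        Dp t ≤ 2 * mSpeed φ t + Dm t := by
      have hTne : ∀ᵐ t ∂(MeasureTheory.volume : MeasureTheory.Measure ℝ), t ≠ T := by
        rw [MeasureTheory.ae_iff]
        have he : {t : ℝ | ¬ t ≠ T} = {T} := by ext t; simp
        rw [he]
        exact MeasureTheory.measure_singleton T
      filter_upwards [MeasureTheory.ae_restrict_mem measurableSet_Ioc,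
        MeasureTheory.ae_restrict_of_ae hms, MeasureTheory.ae_restrict_of_ae hTne]
        with t ht hA hne
      refine hA ⟨ht.1, ?_⟩
      rcases lt_or_eq_of_le (le_trans ht.2 hT1) with hlt | heq
      · exact hlt
      · exfalso
        exact hne (le_antisymm ht.2 (by rw [heq]; exact hT1))
    have hchain : Fp.measure (Set.Ioc 0 T)
        ≤ 2 * (∫⁻ t in Set.Ioc (0:ℝ) T, mSpeed φ t) + Fm.measure (Set.Ioc 0 T) := by
      calc Fp.measure (Set.Ioc 0 T) = ∫⁻ t in Set.Ioc (0:ℝ) T, Dp t :=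
            (hDpint _ measurableSet_Ioc).symm
      _ ≤ ∫⁻ t in Set.Ioc (0:ℝ) T, (2 * mSpeed φ t + Dm t) :=
            MeasureTheory.lintegral_mono_ae hboundae
      _ = (∫⁻ t in Set.Ioc (0:ℝ) T, 2 * mSpeed φ t) + ∫⁻ t in Set.Ioc (0:ℝ) T, Dm t :=
            MeasureTheory.lintegral_add_right _ (MeasureTheory.Measure.measurable_rnDeriv _ _)
      _ = 2 * (∫⁻ t in Set.Ioc (0:ℝ) T, mSpeed φ t) + Fm.measure (Set.Ioc 0 T) := by
            rw [MeasureTheory.lintegral_const_mul' 2 _ (by norm_num),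
              hDmint _ measurableSet_Ioc]
    rw [StieltjesFunction.measure_Ioc, StieltjesFunction.measure_Ioc] at hchain
    have e1 : Fp T - Fp 0 = (G T - G 0) + ψc T := by
      show (G T + ψc T) - (G 0 + ψc 0) = _
      rw [hψc0]; ring
    have e2 : Fm T - Fm 0 = (G T - G 0) - ψc T := by
      show (G T - ψc T) - (G 0 - ψc 0) = _
      rw [hψc0]; ring
    have hA2 : ψc T ≤ G T - G 0 := by
      have := (abs_le.1 (hkey 0 T hT0.le)).2
      rw [hψc0] at this
      linarith
    have hψT0 : 0 ≤ ψc T := le_trans hinvh.le hψT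
    rw [e1, e2] at hchain
    have e3 : ENNReal.ofReal ((G T - G 0) + ψc T)
        = ENNReal.ofReal ((G T - G 0) - ψc T) + ENNReal.ofReal (2 * ψc T) := by
      rw [← ENNReal.ofReal_add (by linarith) (by linarith)]
      congr 1
      ring
    rw [e3] at hchain
    rw [show (2 * (∫⁻ t in Set.Ioc (0:ℝ) T, mSpeed φ t)) + ENNReal.ofReal ((G T - G 0) - ψc T)
      = ENNReal.ofReal ((G T - G 0) - ψc T) + 2 * (∫⁻ t in Set.Ioc (0:ℝ) T, mSpeed φ t)
      from add_comm _ _] at hchain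
    exact (ENNReal.add_le_add_iff_left ENNReal.ofReal_ne_top).1 hchain
  -- final computation
  calc (2:ℝ≥0∞) = (h:ℝ≥0∞) * ENNReal.ofReal (2 * (1/(h:ℝ))) := by
        rw [← ENNReal.ofReal_natCast h, ← ENNReal.ofReal_mul (by positivity)]
        rw [show (h:ℝ) * (2 * (1/(h:ℝ))) = 2 from by field_simp]
        exact (ENNReal.ofReal_ofNat 2).symm
  _ ≤ (h:ℝ≥0∞) * ENNReal.ofReal (2 * ψc T) := by
        gcongr
  _ ≤ (h:ℝ≥0∞) * (2 * ∫⁻ t in Set.Ioc (0:ℝ) T, mSpeed φ t) := by gcongr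
  _ = ∫⁻ t in Set.Ioo (0:ℝ) T, (2*(h:ℝ≥0∞)) * mSpeed φ t := by
        rw [MeasureTheory.lintegral_const_mul' (2*(h:ℝ≥0∞)) _
          (ENNReal.mul_ne_top (by norm_num) (ENNReal.natCast_ne_top h)), hIocIoo]
        ring
  _ ≤ actionIntegral fE φ := step1
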